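/- Let T > 0, r > 0, L ≥ 0, and let h : [0,T] → ℝ be L-Lipschitz; let h' denote its almost-everywhere defined derivative. Define D : [0,T] → ℝ by D(t) := min( r, sup_{0 ≤ τ ≤ t} |h(0) − h(τ)| ). Then for all 0 ≤ t₁ ≤ t₂ ≤ T, D(t₂) − D(t₁) ≤ ∫_{t₁}^{t₂} |h'(s)| ds. -/

import Mathlib

open MeasureTheory Set Filter Topology

private lemma avg_tendsto {H : ℝ → ℝ} (hHc : Continuous H) (c : ℝ) :
    Tendsto (fun n : ℕ => (∫ x in c..(c + 1/(n+1:ℝ)), H x) / (1/(n+1:ℝ))) atTop (𝓝 (H c)) := by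
  have hF : HasDerivAt (fun u => ∫ x in c..u, H x) (H c) c :=
    intervalIntegral.integral_hasDerivAt_right (hHc.intervalIntegrable _ _)
      (hHc.stronglyMeasurableAtFilter _ _) hHc.continuousAt
  rw [hasDerivAt_iff_tendsto_slope] at hF
  have hseq : Tendsto (fun n : ℕ => c + 1/(n+1:ℝ)) atTop (𝓝[≠] c) := by
    refine tendsto_nhdsWithin_of_tendsto_nhds_of_eventually_within _ ?_ ?_
    · simpa using (tendsto_const_nhds (x := c)).add tendsto_one_div_add_atTop_nhds_zero_nat
    · refine Eventually.of_forall fun n => ?_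
      have h1 : (0:ℝ) < 1/(n+1:ℝ) := by positivity
      simp only [mem_compl_iff, mem_singleton_iff]
      intro hc
      nlinarith [hc]
  have := hF.comp hseq
  refine this.congr fun n => ?_
  have h1 : (0:ℝ) < 1/(n+1:ℝ) := by positivity
  simp [Function.comp, slope_def_field, intervalIntegral.integral_same]

/-- Key real-variable lemma: a globally Lipschitz function with a.e. derivative `h'` on
`Ioo a b` satisfies `|H b - H a| ≤ ∫ |h'|`, and `|h'|` is integrable on `Ioc a b`. -/
private lemma lip_key {L : ℝ} (hL : 0 ≤ L) {H h' : ℝ → ℝ}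
    (hlip : ∀ s t : ℝ, |H s - H t| ≤ L * |s - t|)
    {a b : ℝ} (hab : a ≤ b)
    (hd : ∀ᵐ s ∂(volume : Measure ℝ), s ∈ Ioo a b → HasDerivAt H (h' s) s) :
    IntegrableOn (fun s => |h' s|) (Ioc a b) volume ∧
      |H b - H a| ≤ ∫ s in a..b, |h' s| := by
  have hHc : Continuous H := by
    have : LipschitzWith ⟨L, hL⟩ H := by
      apply LipschitzWith.of_dist_le_mul
      intro x y
      rw [Real.dist_eq, Real.dist_eq]; exact hlip x y
    exact this.continuous
  set δ : ℕ → ℝ := fun n => 1/(n+1:ℝ) with hδdef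
  have hδpos : ∀ n, 0 < δ n := fun n => by positivity
  set g : ℕ → ℝ → ℝ := fun n s => (H (s + δ n) - H s) / δ n with hgdef
  have hgcont : ∀ n, Continuous (g n) :=
    fun n => ((hHc.comp (continuous_id.add continuous_const)).sub hHc).div_const _
  have hgbd : ∀ n s, |g n s| ≤ L := by
    intro n s
    rw [hgdef]
    simp only
    rw [abs_div, abs_of_pos (hδpos n), div_le_iff₀ (hδpos n)]
    calc |H (s + δ n) - H s| ≤ L * |s + δ n - s| := hlip _ _
      _ = L * δ n := by rw [add_sub_cancel_left, abs_of_pos (hδpos n)]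
  -- a.e. pointwise convergence on Ioo a b
  have htend : ∀ᵐ s ∂(volume.restrict (Ioo a b)), Tendsto (fun n => g n s) atTop (𝓝 (h' s)) := by
    filter_upwards [ae_restrict_of_ae hd, ae_restrict_mem measurableSet_Ioo] with s hs hmem
    have hds := hs hmem
    rw [hasDerivAt_iff_tendsto_slope] at hds
    have hseq : Tendsto (fun n : ℕ => s + δ n) atTop (𝓝[≠] s) := by
      refine tendsto_nhdsWithin_of_tendsto_nhds_of_eventually_within _ ?_ ?_
      · simpa [hδdef, one_div] using
          (tendsto_const_nhds (x := s)).add tendsto_one_div_add_atTop_nhds_zero_nat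
      · refine Eventually.of_forall fun n => ?_
        simp only [mem_compl_iff, mem_singleton_iff]
        intro hc
        nlinarith [hδpos n, hc]
    refine (hds.comp hseq).congr fun n => ?_
    simp [Function.comp, slope_def_field, hgdef]
  have hmeash' : AEStronglyMeasurable h' (volume.restrict (Ioo a b)) :=
    aestronglyMeasurable_of_tendsto_ae atTop (fun n => (hgcont n).aestronglyMeasurable) htend
  have hbd' : ∀ᵐ s ∂(volume.restrict (Ioo a b)), |h' s| ≤ L :=
    htend.mono fun s hs => le_of_tendsto' hs.abs fun n => hgbd n s
  have hboundint : Integrable (fun _ : ℝ => L) (volume.restrict (Ioo a b)) :=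
    integrableOn_const measure_Ioo_lt_top.ne
  have hintIoo : IntegrableOn (fun s => |h' s|) (Ioo a b) volume := by
    refine Integrable.mono' hboundint ?_ ?_
    · exact hmeash'.norm.congr (by filter_upwards with s using (Real.norm_eq_abs _))
    · filter_upwards [hbd'] with s hs using by simpa using hs
  have hintIoc : IntegrableOn (fun s => |h' s|) (Ioc a b) volume :=
    (integrableOn_Ioc_iff_integrableOn_Ioo).2 hintIoo
  refine ⟨hintIoc, ?_⟩
  -- convergence of integrals of |g n| by dominated convergence
  have key2 : Tendsto (fun n => ∫ s in Ioo a b, |g n s|) atTop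
      (𝓝 (∫ s in Ioo a b, |h' s|)) := by
    refine tendsto_integral_of_dominated_convergence (fun _ => L)
      (fun n => ((hgcont n).abs).aestronglyMeasurable) hboundint
      (fun n => Eventually.of_forall fun s => ?_) (htend.mono fun s hs => hs.abs)
    simpa using hgbd n s
  -- convergence of integrals of g n to H b - H a
  have claim1 : Tendsto (fun n => ∫ s in a..b, g n s) atTop (𝓝 (H b - H a)) := by
    have heq : ∀ n, ∫ s in a..b, g n s
        = (∫ x in b..(b + δ n), H x) / δ n - (∫ x in a..(a + δ n), H x) / δ n := by
      intro n
      have hint1 : IntervalIntegrable (fun s => H (s + δ n)) volume a b :=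
        (hHc.comp (continuous_id.add continuous_const)).intervalIntegrable _ _
      have hI : ∀ u v : ℝ, IntervalIntegrable H volume u v := fun u v =>
        hHc.intervalIntegrable _ _
      have e1 : ∫ s in a..b, g n s
          = ((∫ s in a..b, H (s + δ n)) - ∫ s in a..b, H s) / δ n := by
        rw [hgdef]
        simp only
        rw [intervalIntegral.integral_div, intervalIntegral.integral_sub hint1 (hI a b)]
      rw [e1, intervalIntegral.integral_comp_add_right]
      have I1 : (∫ x in a..(a + δ n), H x) + ∫ x in (a + δ n)..(b + δ n), H x
          = ∫ x in a..(b + δ n), H x :=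
        intervalIntegral.integral_add_adjacent_intervals (hI _ _) (hI _ _)
      have I2 : (∫ x in a..b, H x) + ∫ x in b..(b + δ n), H x = ∫ x in a..(b + δ n), H x :=
        intervalIntegral.integral_add_adjacent_intervals (hI _ _) (hI _ _)
      field_simp
      congr 1
      linarith
    rw [show 𝓝 (H b - H a) = 𝓝 (H b - H a) from rfl]
    have := (avg_tendsto hHc b).sub (avg_tendsto hHc a)
    refine Tendsto.congr ?_ this
    intro n
    rw [heq n]
  -- combine
  have habs : ∀ n, |∫ s in a..b, g n s| ≤ ∫ s in Ioo a b, |g n s| := by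
    intro n
    calc |∫ s in a..b, g n s| ≤ ∫ s in a..b, |g n s| :=
          intervalIntegral.abs_integral_le_integral_abs hab
      _ = ∫ s in Ioo a b, |g n s| := by
          rw [intervalIntegral.integral_of_le hab, integral_Ioc_eq_integral_Ioo]
  have final : |H b - H a| ≤ ∫ s in Ioo a b, |h' s| :=
    le_of_tendsto_of_tendsto' claim1.abs key2 habs
  rwa [intervalIntegral.integral_of_le hab, integral_Ioc_eq_integral_Ioo]

/-- The real-variable core of the distortion bound: for an `L`-Lipschitz function
`h : [0,T] → ℝ` with almost-everywhere derivative `h'`, the scalar distance-distortion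
`D(t) = min(r, sup_{τ ≤ t} |h 0 - h τ|)` satisfies
`D(t₂) - D(t₁) ≤ ∫_{t₁}^{t₂} |h'|`. -/
theorem distortion_le_integral_deriv (T r L : ℝ) (hT : 0 < T) (hr : 0 < r) (hL : 0 ≤ L)
    (h h' : ℝ → ℝ)
    (hlip : ∀ s ∈ Icc (0:ℝ) T, ∀ t ∈ Icc (0:ℝ) T, |h s - h t| ≤ L * |s - t|)
    (hderiv : ∀ᵐ s ∂(volume : Measure ℝ), s ∈ Ioo (0:ℝ) T →
      HasDerivWithinAt h (h' s) (Icc (0:ℝ) T) s)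
    (D : ℝ → ℝ)
    (hD : ∀ t, D t = min r (sSup ((fun τ => |h 0 - h τ|) '' Icc 0 t))) :
    ∀ t₁ t₂ : ℝ, 0 ≤ t₁ → t₁ ≤ t₂ → t₂ ≤ T →
      D t₂ - D t₁ ≤ ∫ s in t₁..t₂, |h' s| := by
  intro t₁ t₂ ht₁ h12 h2T
  have h0T : (0:ℝ) ≤ T := hT.le
  set H : ℝ → ℝ := fun x => h (max 0 (min x T)) with hHdef
  have hclamp : ∀ x ∈ Icc (0:ℝ) T, max 0 (min x T) = x := fun x hx => by
    rw [min_eq_left hx.2, max_eq_right hx.1]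
  have hclampmem : ∀ x : ℝ, max 0 (min x T) ∈ Icc (0:ℝ) T := fun x =>
    ⟨le_max_left _ _, max_le h0T (min_le_right _ _)⟩
  have hHeq : ∀ x ∈ Icc (0:ℝ) T, H x = h x := fun x hx => by
    rw [hHdef]; simp only; rw [hclamp x hx]
  have hlipH : ∀ s t : ℝ, |H s - H t| ≤ L * |s - t| := by
    intro s t
    calc |H s - H t| ≤ L * |max 0 (min s T) - max 0 (min t T)| :=
          hlip _ (hclampmem s) _ (hclampmem t)
      _ ≤ L * |s - t| := by
          refine mul_le_mul_of_nonneg_left ?_ hL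
          calc |max 0 (min s T) - max 0 (min t T)|
              ≤ |min s T - min t T| := by
                simpa [max_comm] using abs_max_sub_max_le_abs (min s T) (min t T) 0
            _ ≤ max |s - t| |T - T| := abs_min_sub_min_le_max s T t T
            _ = |s - t| := by simp
  have hdH : ∀ᵐ s ∂(volume : Measure ℝ), s ∈ Ioo t₁ t₂ → HasDerivAt H (h' s) s := by
    filter_upwards [hderiv] with s hs hmem
    have hs0T : s ∈ Ioo (0:ℝ) T := ⟨lt_of_le_of_lt ht₁ hmem.1, lt_of_lt_of_le hmem.2 h2T⟩
    have h1 : HasDerivAt h (h' s) s := (hs hs0T).hasDerivAt (Icc_mem_nhds hs0T.1 hs0T.2)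
    refine h1.congr_of_eventuallyEq ?_
    filter_upwards [Ioo_mem_nhds hs0T.1 hs0T.2] with x hx
    exact hHeq x ⟨hx.1.le, hx.2.le⟩
  obtain ⟨hint, hkey⟩ := lip_key hL hlipH h12 hdH
  have hIIab : IntervalIntegrable (fun s => |h' s|) volume t₁ t₂ :=
    (intervalIntegrable_iff_integrableOn_Ioc_of_le h12).2 hint
  set I := ∫ s in t₁..t₂, |h' s| with hIdef
  have hInn : 0 ≤ I := intervalIntegral.integral_nonneg h12 (fun _ _ => abs_nonneg _)
  set S : ℝ → ℝ := fun t => sSup ((fun τ => |h 0 - h τ|) '' Icc 0 t) with hSdef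
  have hne : ∀ t, 0 ≤ t → ((fun τ => |h 0 - h τ|) '' Icc 0 t).Nonempty := fun t ht =>
    ⟨_, mem_image_of_mem _ (left_mem_Icc.2 ht)⟩
  have hbdd : ∀ t, t ≤ T → BddAbove ((fun τ => |h 0 - h τ|) '' Icc 0 t) := by
    intro t htT
    refine ⟨L * T, ?_⟩
    rintro x ⟨τ, hτ, rfl⟩
    have hτT : τ ∈ Icc (0:ℝ) T := ⟨hτ.1, hτ.2.trans htT⟩
    calc |h 0 - h τ| ≤ L * |0 - τ| := hlip 0 ⟨le_rfl, h0T⟩ τ hτT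
      _ ≤ L * T := by
          refine mul_le_mul_of_nonneg_left ?_ hL
          rw [zero_sub, abs_neg, abs_of_nonneg hτ.1]
          exact hτT.2
  have h1T : t₁ ≤ T := h12.trans h2T
  have hS12 : S t₁ ≤ S t₂ :=
    csSup_le_csSup (hbdd t₂ h2T) (hne t₁ ht₁) (image_mono (Icc_subset_Icc_right h12))
  have hS2 : S t₂ ≤ S t₁ + I := by
    refine csSup_le (hne t₂ (ht₁.trans h12)) ?_
    rintro x ⟨τ, hτ, rfl⟩
    rcases le_or_gt τ t₁ with hcase | hcase
    · have : |h 0 - h τ| ≤ S t₁ :=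
        le_csSup (hbdd t₁ h1T) (mem_image_of_mem _ ⟨hτ.1, hcase⟩)
      linarith
    · have e1 : |h 0 - h τ| ≤ |h 0 - h t₁| + |h t₁ - h τ| := abs_sub_le _ _ _
      have e2 : |h 0 - h t₁| ≤ S t₁ :=
        le_csSup (hbdd t₁ h1T) (mem_image_of_mem _ ⟨ht₁, le_rfl⟩)
      have hτIcc : τ ∈ Icc (0:ℝ) T := ⟨hτ.1, hτ.2.trans h2T⟩
      have ht₁Icc : t₁ ∈ Icc (0:ℝ) T := ⟨ht₁, h1T⟩
      have hdτ : ∀ᵐ s ∂(volume : Measure ℝ), s ∈ Ioo t₁ τ → HasDerivAt H (h' s) s :=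
        hdH.mono fun s hs hmem => hs ⟨hmem.1, hmem.2.trans_le hτ.2⟩
      obtain ⟨-, hkeyτ⟩ := lip_key hL hlipH hcase.le hdτ
      have e3 : |h t₁ - h τ| = |H τ - H t₁| := by
        rw [hHeq τ hτIcc, hHeq t₁ ht₁Icc, abs_sub_comm]
      have e5 : ∫ s in t₁..τ, |h' s| ≤ I :=
        intervalIntegral.integral_mono_interval le_rfl hcase.le hτ.2
          (Eventually.of_forall fun s => abs_nonneg _) hIIab
      have e4 : |h t₁ - h τ| ≤ I := by
        rw [e3]; exact hkeyτ.trans e5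
      linarith
  rw [hD t₁, hD t₂]
  show min r (S t₂) - min r (S t₁) ≤ I
  rcases le_total r (S t₁) with hle | hle
  · have m1 : min r (S t₁) = r := min_eq_left hle
    have m2 : min r (S t₂) = r := min_eq_left (hle.trans hS12)
    rw [m1, m2]; simpa using hInn
  · have m1 : min r (S t₁) = S t₁ := min_eq_right hle
    have m2 : min r (S t₂) ≤ S t₂ := min_le_right _ _
    rw [m1]
    linarith
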